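/- Every tame finite-dimensional algebra A over an algebraically closed field K of characteristic zero is Schur-tame. -/

import Mathlib

/- ------------------------------------------------------------------
  Common framework: quivers, matrix representation varieties with the
  Zariski topology, the base-change group action, (semi-)stability,
  Schur modules, direct sums, moduli spaces as topological GIT
  quotients, semi-invariants, normality via coordinate rings, and the
  tame / Schur-tame / strictly wild conditions.
------------------------------------------------------------------ -/

namespace ModuliPaper

/-- A finite quiver: vertices `V`, arrows `Ar`, tail `s` and head `t`. -/
structure Quiv where
  V : Type
  Ar : Type
  [fintV : Fintype V]
  [decV : DecidableEq V]
  [fintA : Fintype Ar]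
  [decA : DecidableEq Ar]
  s : Ar → V
  t : Ar → V

attribute [instance] Quiv.fintV Quiv.decV Quiv.fintA Quiv.decA

variable (K : Type) [Field K]

/-- Affine space over `K`, carrying the Zariski topology (below). -/
def AffSp (ι : Type) : Type := ι → K

/-- The Zariski topology on affine space: the basic open sets are the
complements of hypersurfaces. -/
noncomputable instance AffSp.topologicalSpace (ι : Type) : TopologicalSpace (AffSp K ι) :=
  TopologicalSpace.generateFrom
    {U | ∃ p : MvPolynomial ι K, U = {x : AffSp K ι | MvPolynomial.eval x p ≠ 0}}

/-- A point of the representation space of the quiver `Q` with dimension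
vector `d`: a matrix for every arrow. -/
structure Rep (Q : Quiv) (d : Q.V → ℕ) where
  mat : ∀ a : Q.Ar, Matrix (Fin (d (Q.t a))) (Fin (d (Q.s a))) K

/-- The coordinates of the representation space. -/
def CoordIdx (Q : Quiv) (d : Q.V → ℕ) : Type :=
  Σ a : Q.Ar, Fin (d (Q.t a)) × Fin (d (Q.s a))

def Rep.coords {Q : Quiv} {d : Q.V → ℕ} (M : Rep K Q d) : AffSp K (CoordIdx Q d) :=
  fun c => M.mat c.1 c.2.1 c.2.2

/-- The Zariski topology on the representation space. -/
noncomputable instance Rep.topologicalSpace (Q : Quiv) (d : Q.V → ℕ) :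
    TopologicalSpace (Rep K Q d) :=
  TopologicalSpace.induced (Rep.coords K) inferInstance

/-- The base change group `GL(d) = ∏ₓ GL(d(x),K)` (as a family of invertible
matrices) acting by simultaneous conjugation. -/
def glAct {Q : Quiv} {d : Q.V → ℕ}
    (g : ∀ x : Q.V, Matrix.GeneralLinearGroup (Fin (d x)) K) (M : Rep K Q d) :
    Rep K Q d :=
  ⟨fun a => (g (Q.t a) : Matrix (Fin (d (Q.t a))) (Fin (d (Q.t a))) K) * M.mat a *
    (((g (Q.s a))⁻¹ : Matrix.GeneralLinearGroup (Fin (d (Q.s a))) K) :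
      Matrix (Fin (d (Q.s a))) (Fin (d (Q.s a))) K)⟩

/-- Two points are isomorphic as modules iff they lie in the same `GL(d)`-orbit. -/
def Iso {Q : Quiv} {d : Q.V → ℕ} (M N : Rep K Q d) : Prop :=
  ∃ g, glAct K g M = N

/-- The `GL(d)`-orbit of a point of the representation space. -/
def glOrbit {Q : Quiv} {d : Q.V → ℕ} (M : Rep K Q d) : Set (Rep K Q d) :=
  {N | Iso K M N}

def IsGLInvariant {Q : Quiv} {d : Q.V → ℕ} (C : Set (Rep K Q d)) : Prop :=
  ∀ g M, M ∈ C → glAct K g M ∈ C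

/-- `C` is the closure of a single `GL(d)`-orbit. -/
def IsOrbitClosure {Q : Quiv} {d : Q.V → ℕ} (C : Set (Rep K Q d)) : Prop :=
  ∃ M : Rep K Q d, C = closure (glOrbit K M)

/-- Paths in a quiver, via Mathlib's `Quiver.Path`. -/
instance quivQuiver (Q : Quiv) : Quiver Q.V :=
  ⟨fun x y => {a : Q.Ar // Q.s a = x ∧ Q.t a = y}⟩

/-- The linear map attached to an arrow by a representation. -/
def arrowEval {Q : Quiv} {d : Q.V → ℕ} (M : Rep K Q d) {x y : Q.V} (e : x ⟶ y) :
    (Fin (d x) → K) →ₗ[K] (Fin (d y) → K) := by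
  obtain ⟨a, rfl, rfl⟩ := e
  exact (M.mat a).mulVecLin

/-- The linear map attached to a path by a representation. -/
def pathEval {Q : Quiv} {d : Q.V → ℕ} (M : Rep K Q d) :
    {x y : Q.V} → Quiver.Path x y → ((Fin (d x) → K) →ₗ[K] (Fin (d y) → K))
  | _, _, Quiver.Path.nil => LinearMap.id
  | _, _, Quiver.Path.cons p e => (arrowEval K M e).comp (pathEval M p)

/-- The evaluation of a K-linear combination of parallel paths (an element of the
path algebra) on a representation. -/
noncomputable def relEval {Q : Quiv} {d : Q.V → ℕ} (M : Rep K Q d) {x y : Q.V}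
    (r : Quiver.Path x y →₀ K) : (Fin (d x) → K) →ₗ[K] (Fin (d y) → K) :=
  r.sum fun p c => c • pathEval K M p

/-- A set of relations for a quiver: admissible elements of the path algebra. -/
structure RelSet (Q : Quiv) where
  rels : Set (Σ x y : Q.V, (Quiver.Path x y →₀ K))

/-- The module variety `mod(A,d)` of the bound quiver algebra `A = KQ/I`,
`I = ⟨rels⟩`: the locus where all relations vanish. -/
noncomputable def modVar {Q : Quiv} (R : RelSet K Q) (d : Q.V → ℕ) : Set (Rep K Q d) :=
  {M | ∀ r ∈ R.rels, relEval K M r.2.2 = 0}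

/-- `Q` has no oriented cycles. -/
def Quiv.IsAcyclic (Q : Quiv) : Prop :=
  ∀ (x : Q.V) (p : Quiver.Path x x), p = Quiver.Path.nil

/-- Admissibility of the ideal of relations, encoded semantically:
every relation lies in (the span of paths of) length `≥ 2`, and some power of the
arrow ideal is contained in the ideal of relations (i.e. sufficiently long paths
act by `0` on every module of the algebra). -/
noncomputable def RelSet.IsAdmissible {Q : Quiv} (R : RelSet K Q) : Prop :=
  (∀ r ∈ R.rels, ∀ p ∈ (r.2.2).support, 2 ≤ p.length) ∧
  ∃ L : ℕ, ∀ (d : Q.V → ℕ), ∀ M ∈ modVar K R d, ∀ (x y : Q.V) (p : Quiver.Path x y),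
    L ≤ p.length → pathEval K M p = 0

/-- A subrepresentation (= submodule) of a representation. -/
structure SubRep {Q : Quiv} {d : Q.V → ℕ} (M : Rep K Q d) where
  space : ∀ x : Q.V, Submodule K (Fin (d x) → K)
  stable : ∀ a : Q.Ar, ∀ v ∈ space (Q.s a), (M.mat a).mulVec v ∈ space (Q.t a)

/-- The dimension vector of a subrepresentation. -/
noncomputable def SubRep.dimVec {Q : Quiv} {d : Q.V → ℕ} {M : Rep K Q d}
    (W : SubRep K M) : Q.V → ℕ :=
  fun x => Module.finrank K (W.space x)

/-- The pairing `θ(e) = ∑ₓ θ(x) e(x)` of a weight with a dimension vector. -/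
def wt {Q : Quiv} (θ : Q.V → ℤ) (e : Q.V → ℕ) : ℤ := ∑ x : Q.V, θ x * (e x : ℤ)

/-- King's θ-semi-stability. -/
def IsSemiStable {Q : Quiv} {d : Q.V → ℕ} (θ : Q.V → ℤ) (M : Rep K Q d) : Prop :=
  wt θ d = 0 ∧ ∀ W : SubRep K M, wt θ (W.dimVec K) ≤ 0

/-- King's θ-stability. -/
def IsStable {Q : Quiv} {d : Q.V → ℕ} (θ : Q.V → ℤ) (M : Rep K Q d) : Prop :=
  d ≠ 0 ∧ wt θ d = 0 ∧
    ∀ W : SubRep K M, W.dimVec K ≠ 0 → W.dimVec K ≠ d → wt θ (W.dimVec K) < 0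

/-- Morphisms of representations. -/
def IsHom {Q : Quiv} {d d' : Q.V → ℕ} (M : Rep K Q d) (N : Rep K Q d')
    (φ : ∀ x : Q.V, Matrix (Fin (d' x)) (Fin (d x)) K) : Prop :=
  ∀ a : Q.Ar, φ (Q.t a) * M.mat a = N.mat a * φ (Q.s a)

/-- Endomorphisms of a representation. -/
def IsEndo {Q : Quiv} {d : Q.V → ℕ} (M : Rep K Q d)
    (φ : ∀ x : Q.V, Matrix (Fin (d x)) (Fin (d x)) K) : Prop :=
  IsHom K M M φ

/-- A Schur module: all endomorphisms are scalar, i.e. `End_A(M) ≅ K`. -/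
def IsSchur {Q : Quiv} {d : Q.V → ℕ} (M : Rep K Q d) : Prop :=
  ∀ φ, IsEndo K M φ → ∃ c : K, ∀ x : Q.V, φ x = c • (1 : Matrix (Fin (d x)) (Fin (d x)) K)

/-- The direct sum of two representations. -/
def dsum {Q : Quiv} {d₁ d₂ : Q.V → ℕ} (M : Rep K Q d₁) (N : Rep K Q d₂) :
    Rep K Q (d₁ + d₂) :=
  ⟨fun a => Matrix.reindex finSumFinEquiv finSumFinEquiv
    (Matrix.fromBlocks (M.mat a) 0 0 (N.mat a))⟩

/-- Transport of a representation along an equality of dimension vectors. -/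
def recast {Q : Quiv} {d d' : Q.V → ℕ} (h : d = d') (M : Rep K Q d) : Rep K Q d' :=
  h ▸ M

/-- The dimension vector of a list of representations. -/
def sumDim {Q : Quiv} : List (Σ e : Q.V → ℕ, Rep K Q e) → (Q.V → ℕ)
  | [] => 0
  | x :: L => x.1 + sumDim L

/-- The direct sum of a list of representations. -/
def listSum {Q : Quiv} : (L : List (Σ e : Q.V → ℕ, Rep K Q e)) → Rep K Q (sumDim K L)
  | [] => ⟨fun _ => 0⟩
  | x :: L => dsum K x.2 (listSum L)

/-- `M` is isomorphic to the direct sum of the members of the list `L`. -/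
def IsDirectSumOf {Q : Quiv} {d : Q.V → ℕ} (M : Rep K Q d)
    (L : List (Σ e : Q.V → ℕ, Rep K Q e)) : Prop :=
  ∃ h : sumDim K L = d, Iso K (recast K h (listSum K L)) M

/-- Indecomposability of a representation. -/
def Indec {Q : Quiv} {d : Q.V → ℕ} (M : Rep K Q d) : Prop :=
  d ≠ 0 ∧ ∀ (d₁ d₂ : Q.V → ℕ) (M₁ : Rep K Q d₁) (M₂ : Rep K Q d₂) (h : d₁ + d₂ = d),
    d₁ ≠ 0 → d₂ ≠ 0 → ¬ Iso K (recast K h (dsum K M₁ M₂)) M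

/-- An irreducible component of a (closed) subvariety `Z` of the representation
space: a maximal irreducible closed subset of `Z`. -/
def IsIrrComp {Q : Quiv} {d : Q.V → ℕ} (Z C : Set (Rep K Q d)) : Prop :=
  C ⊆ Z ∧ IsClosed C ∧ IsIrreducible C ∧
    ∀ D : Set (Rep K Q d), D ⊆ Z → IsClosed D → IsIrreducible D → C ⊆ D → C = D

/-- The θ-semi-stable locus of `C`. -/
def ssLocus {Q : Quiv} {d : Q.V → ℕ} (C : Set (Rep K Q d)) (θ : Q.V → ℤ) :
    Set (Rep K Q d) :=
  {M | M ∈ C ∧ IsSemiStable K θ M}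

/-- S-equivalence on the semistable locus: orbit closures meet inside the
semistable locus.  The GIT quotient identifies exactly S-equivalent points. -/
def SEquiv {Q : Quiv} {d : Q.V → ℕ} (C : Set (Rep K Q d)) (θ : Q.V → ℤ)
    (M N : ↥(ssLocus K C θ)) : Prop :=
  (closure (glOrbit K M.1) ∩ closure (glOrbit K N.1) ∩ ssLocus K C θ).Nonempty

/-- The moduli space `M(C)^{ss}_θ` of θ-semi-stable modules in `C`, realized
(as a topological space) as the quotient of the semistable locus of `C` by
S-equivalence; its points are the θ-polystable modules in `C`. -/
def ModuliSpace {Q : Quiv} {d : Q.V → ℕ} (C : Set (Rep K Q d)) (θ : Q.V → ℤ) : Type :=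
  Quot (SEquiv K C θ)

noncomputable instance {Q : Quiv} {d : Q.V → ℕ} (C : Set (Rep K Q d)) (θ : Q.V → ℤ) :
    TopologicalSpace (ModuliSpace K C θ) :=
  instTopologicalSpaceQuot

/-- The image of `C^{ss}_θ` in the moduli space of the ambient variety `Z`:
this is `M(C)^{ss}_θ` as a (closed) subvariety of `M(Z)^{ss}_θ`. -/
def moduliImage {Q : Quiv} {d : Q.V → ℕ} (Z C : Set (Rep K Q d)) (θ : Q.V → ℤ) :
    Set (ModuliSpace K Z θ) :=
  Quot.mk _ '' {M : ↥(ssLocus K Z θ) | M.1 ∈ C}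

/-- The `m`-th symmetric power of a topological space. -/
def SymPow (m : ℕ) (X : Type*) [TopologicalSpace X] : Type _ :=
  Quot (fun f g : Fin m → X => ∃ σ : Equiv.Perm (Fin m), f = g ∘ σ)

noncomputable instance (m : ℕ) (X : Type*) [TopologicalSpace X] :
    TopologicalSpace (SymPow m X) :=
  instTopologicalSpaceQuot

/-- Projective `m`-space over `K` with its Zariski topology (quotient of the
punctured affine cone). -/
def ProjSpace (m : ℕ) : Type :=
  Quot (fun v w : {x : AffSp K (Fin (m + 1)) // ∃ i, x i ≠ 0} =>
    ∃ c : K, c ≠ 0 ∧ ∀ i, w.1 i = c * v.1 i)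

noncomputable instance (m : ℕ) : TopologicalSpace (ProjSpace K m) :=
  instTopologicalSpaceQuot

/-- A product of projective spaces `ℙ^{m 0} × ⋯ × ℙ^{m (n-1)}` over `K`, with its
Zariski topology (quotient of a product of punctured affine cones, carrying the
Zariski topology of the total affine space). -/
def ProdProj (n : ℕ) (m : Fin n → ℕ) : Type :=
  Quot (fun v w : {x : AffSp K (Σ i : Fin n, Fin (m i + 1)) // ∀ i, ∃ j, x ⟨i, j⟩ ≠ 0} =>
    ∃ c : Fin n → K, (∀ i, c i ≠ 0) ∧ ∀ i j, w.1 ⟨i, j⟩ = c i * v.1 ⟨i, j⟩)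

noncomputable instance (n : ℕ) (m : Fin n → ℕ) : TopologicalSpace (ProdProj K n m) :=
  instTopologicalSpaceQuot

end ModuliPaper
namespace ModuliPaper

variable (K : Type) [Field K]

/- --------------------- semi-invariants --------------------- -/

/-- The value of the character `χ_θ` of `GL(d)` at `g`:
`χ_θ(g) = ∏ₓ det(g(x))^{θ(x)}`. -/
noncomputable def chiWt {Q : Quiv} {d : Q.V → ℕ} (θ : Q.V → ℤ)
    (g : ∀ x : Q.V, Matrix.GeneralLinearGroup (Fin (d x)) K) : K :=
  ∏ x : Q.V, ((g x : Matrix (Fin (d x)) (Fin (d x)) K).det) ^ (θ x)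

/-- A semi-invariant of weight `χ_θ` on `C`: a regular (polynomial) function on
`C` satisfying `f(g·M) = χ_θ(g)·f(M)`. -/
def IsSemiInvariant {Q : Quiv} {d : Q.V → ℕ} (C : Set (Rep K Q d)) (θ : Q.V → ℤ)
    (f : ↥C → K) : Prop :=
  (∃ p : MvPolynomial (CoordIdx Q d) K,
      ∀ M : ↥C, f M = MvPolynomial.eval (Rep.coords K M.1) p) ∧
  ∀ (g) (M : ↥C) (h : glAct K g M.1 ∈ C), f ⟨glAct K g M.1, h⟩ = chiWt K θ g * f M

/-- The space `SI(C)_θ` of semi-invariants of weight `χ_θ` on `C`. -/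
noncomputable def SIModule {Q : Quiv} {d : Q.V → ℕ} (C : Set (Rep K Q d))
    (θ : Q.V → ℤ) : Submodule K (↥C → K) where
  carrier := {f | IsSemiInvariant K C θ f}
  add_mem' := by
    rintro f₁ f₂ ⟨⟨p₁, hp₁⟩, hw₁⟩ ⟨⟨p₂, hp₂⟩, hw₂⟩
    refine ⟨⟨p₁ + p₂, fun M => ?_⟩, fun g M h => ?_⟩
    · simp [hp₁ M, hp₂ M]
    · have := hw₁ g M h; have := hw₂ g M h
      simp only [Pi.add_apply, *]; ring
  zero_mem' := ⟨⟨0, fun M => by simp⟩, fun g M h => by simp⟩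
  smul_mem' := by
    rintro c f ⟨⟨p, hp⟩, hw⟩
    refine ⟨⟨c • p, fun M => ?_⟩, fun g M h => ?_⟩
    · simp [hp M, MvPolynomial.smul_eval]
      exact (MvPolynomial.smul_eval _ _ _).symm
    · have := hw g M h
      simp only [Pi.smul_apply, smul_eq_mul, *]; ring

/- --------------------- coordinate rings and normality --------------------- -/

/-- The vanishing ideal of a subset of the representation space. -/
noncomputable def vanishingIdeal {Q : Quiv} {d : Q.V → ℕ} (C : Set (Rep K Q d)) :
    Ideal (MvPolynomial (CoordIdx Q d) K) where
  carrier := {p | ∀ M ∈ C, MvPolynomial.eval (Rep.coords K M) p = 0}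
  add_mem' := by intro p q hp hq M hM; simp [hp M hM, hq M hM]
  zero_mem' := by intro M hM; simp
  smul_mem' := by intro c p hp M hM; simp [smul_eq_mul, hp M hM]

/-- The coordinate ring `K[C]` of a subvariety of the representation space. -/
noncomputable def coordRing {Q : Quiv} {d : Q.V → ℕ} (C : Set (Rep K Q d)) : Type :=
  MvPolynomial (CoordIdx Q d) K ⧸ vanishingIdeal K C

noncomputable instance {Q : Quiv} {d : Q.V → ℕ} (C : Set (Rep K Q d)) :
    CommRing (coordRing K C) :=
  Ideal.Quotient.commRing _

/-- Normality of a variety: its coordinate ring is an integrally closed domain. -/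
def IsNormalVar {Q : Quiv} {d : Q.V → ℕ} (C : Set (Rep K Q d)) : Prop :=
  IsDomain (coordRing K C) ∧ IsIntegrallyClosed (coordRing K C)

/- --------------------- gentle and string algebras --------------------- -/

/-- "at most one element" of a set. -/
def AtMostOne {α : Type*} (s : Set α) : Prop := ∀ a ∈ s, ∀ b ∈ s, a = b

/-- "at most two elements" of a set. -/
def AtMostTwo {α : Type*} (s : Set α) : Prop :=
  ∀ a ∈ s, ∀ b ∈ s, ∀ c ∈ s, a = b ∨ a = c ∨ b = c

/-- A set of monomial (length-two) relations: pairs `(a,b)` of composable arrows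
(`a` followed by `b`), generating the ideal `I = ⟨{ba : (a,b) ∈ R}⟩`. -/
structure PairRels (Q : Quiv) where
  R : Set (Q.Ar × Q.Ar)
  comp : ∀ p ∈ R, Q.t p.1 = Q.s p.2

/-- The module variety of the algebra `KQ/⟨R⟩` with length-two monomial
relations `R`: the locus where all composites `M(b)M(a)`, `(a,b) ∈ R`, vanish. -/
def pairModVar {Q : Quiv} (P : PairRels Q) (d : Q.V → ℕ) : Set (Rep K Q d) :=
  {M | ∀ a b, (hab : (a, b) ∈ P.R) →
    ∀ (i : Fin (d (Q.t b))) (j : Fin (d (Q.s a))),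
      ∑ k : Fin (d (Q.t a)),
        M.mat b i (finCongr (congrArg d (P.comp (a, b) hab)) k) * M.mat a k j = 0}

/-- The gentle conditions on a bound quiver `(Q, I)` with `I` generated by the
length-two paths in `R`. -/
def PairRels.IsGentle {Q : Quiv} (P : PairRels Q) : Prop :=
  (∀ x : Q.V, AtMostTwo {a | Q.s a = x} ∧ AtMostTwo {a | Q.t a = x}) ∧
  (∀ a : Q.Ar, AtMostOne {b | Q.t a = Q.s b ∧ (a, b) ∉ P.R} ∧
               AtMostOne {b | Q.t b = Q.s a ∧ (b, a) ∉ P.R}) ∧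
  (∀ a : Q.Ar, AtMostOne {b | (a, b) ∈ P.R} ∧ AtMostOne {b | (b, a) ∈ P.R})

/-- The length-two path `a`-then-`b` in `Q`. -/
def path2 {Q : Quiv} (a b : Q.Ar) (h : Q.t a = Q.s b) : Quiver.Path (Q.s a) (Q.t b) :=
  (Quiver.Path.nil.cons (⟨a, rfl, rfl⟩ : (Q.s a : Q.V) ⟶ Q.t a)).cons
    (⟨b, h.symm, rfl⟩ : (Q.t a : Q.V) ⟶ Q.t b)

/-- A set of monomial relations (paths of length `≥ 2`). -/
structure MonRels (Q : Quiv) where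
  R : Set (Σ x y : Q.V, Quiver.Path x y)
  len2 : ∀ r ∈ R, 2 ≤ r.2.2.length

/-- The module variety of the monomial algebra `KQ/⟨R⟩`. -/
def monModVar {Q : Quiv} (R : MonRels Q) (d : Q.V → ℕ) : Set (Rep K Q d) :=
  {M | ∀ r ∈ R.R, pathEval K M r.2.2 = 0}

/-- The length-two path `a`-then-`b` lies in the monomial ideal `⟨R⟩`. -/
def MonRels.pairIn {Q : Quiv} (R : MonRels Q) (a b : Q.Ar) : Prop :=
  ∃ h : Q.t a = Q.s b, (⟨Q.s a, Q.t b, path2 a b h⟩ : Σ x y : Q.V, Quiver.Path x y) ∈ R.R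

/-- The string algebra conditions on a monomial bound quiver `(Q, ⟨R⟩)`. -/
def MonRels.IsString {Q : Quiv} (R : MonRels Q) : Prop :=
  (∀ x : Q.V, AtMostTwo {a | Q.s a = x} ∧ AtMostTwo {a | Q.t a = x}) ∧
  (∀ a : Q.Ar, AtMostOne {b | Q.t a = Q.s b ∧ ¬ R.pairIn a b} ∧
               AtMostOne {b | Q.t b = Q.s a ∧ ¬ R.pairIn b a})

/-- A coloring of a quiver: a map on arrows whose fibres are directed paths. -/
structure Coloring (Q : Quiv) (S : Type) where
  c : Q.Ar → S
  isPath : ∀ s : S, ∃ L : List Q.Ar, L.Nodup ∧ (∀ a, a ∈ L ↔ c a = s) ∧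
    L.Chain' (fun a b => Q.t a = Q.s b)

/-- The set of length-two relations `I_c` induced by a coloring: all composable
pairs of arrows of the same color. -/
def colorRels {Q : Quiv} {S : Type} (col : Coloring Q S) : PairRels Q where
  R := {p | Q.t p.1 = Q.s p.2 ∧ col.c p.1 = col.c p.2}
  comp := fun _ hp => hp.1

/- --------------------- band modules (string algebras) --------------------- -/

/-- Over an acyclic string algebra, the indecomposable modules are string and
band modules (Butler–Ringel), and the band modules are exactly the
indecomposables `M` with `dim M = ∑ₐ rank M(a)`. -/
def IsBand {Q : Quiv} {d : Q.V → ℕ} (M : Rep K Q d) : Prop :=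
  Indec K M ∧ (∑ x : Q.V, d x) = ∑ a : Q.Ar, (M.mat a).rank

/-- `M` is (isomorphic to) a direct sum of band modules. -/
def IsSumOfBands {Q : Quiv} {d : Q.V → ℕ} (M : Rep K Q d) : Prop :=
  ∃ L : List (Σ e : Q.V → ℕ, Rep K Q e), (∀ p ∈ L, IsBand K p.2) ∧ IsDirectSumOf K M L

/-- A regular irreducible component: the generic module of `C` is a direct sum
of band modules. -/
def IsGenericallyBands {Q : Quiv} {d : Q.V → ℕ} (C : Set (Rep K Q d)) : Prop :=
  ∃ U : Set (Rep K Q d), IsOpen U ∧ (U ∩ C).Nonempty ∧ ∀ M ∈ U ∩ C, IsSumOfBands K M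

end ModuliPaper
namespace ModuliPaper

variable (K : Type) [Field K]

/- --------------------- tame and Schur-tame --------------------- -/

/-- A one-parameter algebraic family of `d`-dimensional representations defined
over a localization `K[t]_f` of `K[t]`: a free `K[t]_f`-module structure is
encoded by matrices of polynomials divided by a power of `f`. -/
structure ParamFamily (Q : Quiv) (d : Q.V → ℕ) where
  f : Polynomial K
  hf : f ≠ 0
  k : ℕ
  num : ∀ a : Q.Ar, Matrix (Fin (d (Q.t a))) (Fin (d (Q.s a))) (Polynomial K)

/-- The member of the family at the parameter `lam` (i.e. `T ⊗_{K[t]_f} K[t]/(t-lam)`). -/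
noncomputable def ParamFamily.evalAt {Q : Quiv} {d : Q.V → ℕ} (F : ParamFamily K Q d)
    (lam : K) : Rep K Q d :=
  ⟨fun a => Matrix.of fun i j =>
    Polynomial.eval lam (F.num a i j) / (Polynomial.eval lam F.f) ^ F.k⟩

/-- The algebra with module varieties `MV` is Schur-tame: for every dimension
vector `d` there are finitely many one-parameter families of `d`-dimensional
modules, each consisting of pairwise non-isomorphic Schur modules (a
Schur-embedding `T_i ⊗_{R_i} -`), such that every `d`-dimensional Schur module
— up to finitely many isomorphism classes — belongs to one of the families. -/
noncomputable def IsSchurTame {Q : Quiv} (MV : ∀ d : Q.V → ℕ, Set (Rep K Q d)) : Prop :=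
  ∀ d : Q.V → ℕ, ∃ (n : ℕ) (F : Fin n → ParamFamily K Q d),
    (∀ i lam, Polynomial.eval lam (F i).f ≠ 0 →
      (F i).evalAt K lam ∈ MV d ∧ IsSchur K ((F i).evalAt K lam)) ∧
    (∀ i lam₁ lam₂, Polynomial.eval lam₁ (F i).f ≠ 0 → Polynomial.eval lam₂ (F i).f ≠ 0 →
      Iso K ((F i).evalAt K lam₁) ((F i).evalAt K lam₂) → lam₁ = lam₂) ∧
    ∃ Exc : Set (Rep K Q d), Exc.Finite ∧
      ∀ M ∈ MV d, IsSchur K M →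
        (∃ i lam, Polynomial.eval lam (F i).f ≠ 0 ∧ Iso K M ((F i).evalAt K lam)) ∨
        (∃ E ∈ Exc, Iso K M E)

/-- The algebra with module varieties `MV` is tame: for every dimension vector
`d` there are finitely many one-parameter families of `d`-dimensional modules,
each consisting of pairwise non-isomorphic indecomposable modules (a
representation embedding `T_i ⊗_{R_i} -`), such that every `d`-dimensional
indecomposable module — up to finitely many isomorphism classes — belongs to
one of the families. -/
noncomputable def IsTame {Q : Quiv} (MV : ∀ d : Q.V → ℕ, Set (Rep K Q d)) : Prop :=
  ∀ d : Q.V → ℕ, ∃ (n : ℕ) (F : Fin n → ParamFamily K Q d),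
    (∀ i lam, Polynomial.eval lam (F i).f ≠ 0 →
      (F i).evalAt K lam ∈ MV d ∧ Indec K ((F i).evalAt K lam)) ∧
    (∀ i lam₁ lam₂, Polynomial.eval lam₁ (F i).f ≠ 0 → Polynomial.eval lam₂ (F i).f ≠ 0 →
      Iso K ((F i).evalAt K lam₁) ((F i).evalAt K lam₂) → lam₁ = lam₂) ∧
    ∃ Exc : Set (Rep K Q d), Exc.Finite ∧
      ∀ M ∈ MV d, Indec K M →
        (∃ i lam, Polynomial.eval lam (F i).f ≠ 0 ∧ Iso K M ((F i).evalAt K lam)) ∨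
        (∃ E ∈ Exc, Iso K M E)

/- --------------------- strictly wild algebras --------------------- -/

/-- The representation of `Q` of dimension vector `m • e` obtained from a
template `T` of matrices over the free algebra `K⟨x,y⟩` (encoding an
`A`-`K⟨x,y⟩`-bimodule free of finite rank over `K⟨x,y⟩`) by specializing
`(x,y)` to the pair of `m × m` matrices `(X,Y)`. -/
noncomputable def blockRep {Q : Quiv} (e : Q.V → ℕ) (m : ℕ)
    (T : ∀ a : Q.Ar, Matrix (Fin (e (Q.t a))) (Fin (e (Q.s a))) (FreeAlgebra K (Fin 2)))
    (X Y : Matrix (Fin m) (Fin m) K) : Rep K Q (fun x => e x * m) :=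
  ⟨fun a => Matrix.of fun i j =>
    (FreeAlgebra.lift K ![X, Y] (T a (finProdFinEquiv.symm i).1 (finProdFinEquiv.symm j).1))
      (finProdFinEquiv.symm i).2 (finProdFinEquiv.symm j).2⟩

/-- The block-diagonal family of matrices induced by an `m' × m` matrix `ψ`:
the image of a morphism of `K⟨x,y⟩`-modules under the functor `T ⊗ -`. -/
def blockify {Q : Quiv} (e : Q.V → ℕ) {m m' : ℕ} (ψ : Matrix (Fin m') (Fin m) K) :
    ∀ x : Q.V, Matrix (Fin (e x * m')) (Fin (e x * m)) K :=
  fun _ => Matrix.of fun i j =>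
    if (finProdFinEquiv.symm i).1 = (finProdFinEquiv.symm j).1 then
      ψ (finProdFinEquiv.symm i).2 (finProdFinEquiv.symm j).2
    else 0

/-- Strict wildness of the algebra with module varieties `MV`: there is an exact
`K`-linear functor `mod K⟨x,y⟩ → mod A`, given by tensoring with a bimodule
free of finite rank over `K⟨x,y⟩` (encoded by a template `T`), which is fully
faithful. -/
noncomputable def IsStrictlyWild {Q : Quiv} (MV : ∀ d : Q.V → ℕ, Set (Rep K Q d)) : Prop :=
  ∃ (e : Q.V → ℕ)
    (T : ∀ a : Q.Ar, Matrix (Fin (e (Q.t a))) (Fin (e (Q.s a))) (FreeAlgebra K (Fin 2))),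
    (∀ (m : ℕ) (X Y : Matrix (Fin m) (Fin m) K),
      blockRep K e m T X Y ∈ MV (fun x => e x * m)) ∧
    (∀ (m m' : ℕ) (X Y : Matrix (Fin m) (Fin m) K) (X' Y' : Matrix (Fin m') (Fin m') K),
      -- functoriality: morphisms of `K⟨x,y⟩`-modules map to morphisms
      (∀ ψ : Matrix (Fin m') (Fin m) K, ψ * X = X' * ψ → ψ * Y = Y' * ψ →
        IsHom K (blockRep K e m T X Y) (blockRep K e m' T X' Y') (blockify K e ψ)) ∧
      -- faithfulness
      (∀ ψ₁ ψ₂ : Matrix (Fin m') (Fin m) K, blockify (Q := Q) K e ψ₁ = blockify K e ψ₂ → ψ₁ = ψ₂) ∧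
      -- fullness
      (∀ φ, IsHom K (blockRep K e m T X Y) (blockRep K e m' T X' Y') φ →
        ∃ ψ : Matrix (Fin m') (Fin m) K, ψ * X = X' * ψ ∧ ψ * Y = Y' * ψ ∧ φ = blockify K e ψ))

/- --------------------- θ-stable decompositions --------------------- -/

/-- The list of representations `N i j`, `j < m i`, over the indices `i` with
`i < l`. -/
def famList {Q : Quiv} {nn : ℕ} (dd : Fin nn → Q.V → ℕ) (m : Fin nn → ℕ) (l : ℕ)
    (N : ∀ i : Fin nn, Fin (m i) → Rep K Q (dd i)) : List (Σ e : Q.V → ℕ, Rep K Q e) :=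
  ((List.finRange nn).filter (fun i : Fin nn => decide ((i : ℕ) < l))).flatMap
    (fun i : Fin nn => (List.finRange (m i)).map (fun j => ⟨dd i, N i j⟩))

/-- A θ-stable decomposition `C = m₀·C₀ ∔ m₁·C₁ ∔ ⋯`: for the generic module
`M ∈ C^{ss}_θ`, the associated θ-polystable module `gr_θ(M)` (the unique
polystable module in the closure of the orbit of `M` within the semistable
locus) is a direct sum of θ-stable modules, `m i` of which belong to `Cs i`. -/
def ThetaStableDecomp {Q : Quiv} {d : Q.V → ℕ} (C : Set (Rep K Q d)) (θ : Q.V → ℤ)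
    {nn : ℕ} (dd : Fin nn → Q.V → ℕ) (m : Fin nn → ℕ)
    (Cs : ∀ i, Set (Rep K Q (dd i))) : Prop :=
  ∃ U : Set (Rep K Q d), IsOpen U ∧ (U ∩ C).Nonempty ∧
    ∀ M ∈ U ∩ C, IsSemiStable K θ M ∧
      ∃ N : ∀ i, Fin (m i) → Rep K Q (dd i),
        (∀ i j, N i j ∈ Cs i ∧ IsStable K θ (N i j)) ∧
        ∃ P ∈ closure (glOrbit K M), IsSemiStable K θ P ∧
          IsDirectSumOf K P (famList K dd m nn N)

/-- The dimension vector `∑_{i < l} m i • dd i`. -/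
def belowDim {Q : Quiv} {nn : ℕ} (dd : Fin nn → Q.V → ℕ) (m : Fin nn → ℕ) (l : ℕ) :
    Q.V → ℕ :=
  fun x => ∑ i ∈ Finset.univ.filter (fun i : Fin nn => (i : ℕ) < l), m i * dd i x

/-- The direct sum locus `C₀^{⊕ m₀} ⊕ ⋯ ⊕ C_{l-1}^{⊕ m_{l-1}}`. -/
def sumLocusBelow {Q : Quiv} {nn : ℕ} (dd : Fin nn → Q.V → ℕ) (m : Fin nn → ℕ) (l : ℕ)
    (Cs : ∀ i, Set (Rep K Q (dd i))) : Set (Rep K Q (belowDim dd m l)) :=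
  {M | ∃ N : ∀ i, Fin (m i) → Rep K Q (dd i),
    (∀ (i : Fin nn) (j : Fin (m i)), (i : ℕ) < l → N i j ∈ Cs i) ∧ IsDirectSumOf K M (famList K dd m l N)}

/- --------------------- extensions --------------------- -/

/-- The extension of `N` by `M` (`0 → M → Z → N → 0`) determined by the blocks
`E`: `Z(a) = [[M(a), E(a)], [0, N(a)]]`. -/
def triSum {Q : Quiv} {d₁ d₂ : Q.V → ℕ} (M : Rep K Q d₁) (N : Rep K Q d₂)
    (E : ∀ a : Q.Ar, Matrix (Fin (d₁ (Q.t a))) (Fin (d₂ (Q.s a))) K) :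
    Rep K Q (d₁ + d₂) :=
  ⟨fun a => Matrix.reindex finSumFinEquiv finSumFinEquiv
    (Matrix.fromBlocks (M.mat a) (E a) 0 (N.mat a))⟩

/-- `ext¹_A(D, E) = 0`: the minimal dimension of `Ext¹_A(X,Y)` over
`(X,Y) ∈ D × E` vanishes, i.e. there is a pair `(X,Y) ∈ D × E` all of whose
extensions (inside the module variety `MV`) split. -/
def Ext1Vanishes {Q : Quiv} (MV : ∀ e : Q.V → ℕ, Set (Rep K Q e)) {dX dY : Q.V → ℕ}
    (D : Set (Rep K Q dX)) (E : Set (Rep K Q dY)) : Prop :=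
  ∃ X ∈ D, ∃ Y ∈ E, ∀ B, triSum K Y X B ∈ MV (dY + dX) →
    Iso K (triSum K Y X B) (dsum K Y X)

end ModuliPaper

namespace ModuliPaper


variable (K : Type) [Field K]

lemma conj_helper {n m : Type*} [Fintype n] [Fintype m] [DecidableEq n] [DecidableEq m]
    {A A' ψt : Matrix n n K} {B B' ψs : Matrix m m K} {M : Matrix n m K}
    (hA' : A' * A = 1) (hB' : B' * B = 1)
    (h : ψt * (A * M * B') = A * M * B' * ψs) :
    A' * ψt * A * M = M * (B' * ψs * B) := by
  have key := congrArg (fun x => A' * x * B) h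
  simp only [Matrix.mul_assoc] at key ⊢
  rw [hB', Matrix.mul_one] at key
  rw [key, ← Matrix.mul_assoc A' A, hA', Matrix.one_mul]

/-- The matrix of `g x`. -/
def glm {Q : Quiv} {d : Q.V → ℕ} (g : ∀ x : Q.V, Matrix.GeneralLinearGroup (Fin (d x)) K)
    (x : Q.V) : Matrix (Fin (d x)) (Fin (d x)) K := (g x : Matrix (Fin (d x)) (Fin (d x)) K)

lemma glm_inv_mul {Q : Quiv} {d : Q.V → ℕ}
    (g : ∀ x : Q.V, Matrix.GeneralLinearGroup (Fin (d x)) K) (x : Q.V) :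
    glm K (fun y => (g y)⁻¹) x * glm K g x = 1 := by
  simp only [glm, ← Units.val_mul, inv_mul_cancel, Units.val_one]

lemma glm_mul_inv {Q : Quiv} {d : Q.V → ℕ}
    (g : ∀ x : Q.V, Matrix.GeneralLinearGroup (Fin (d x)) K) (x : Q.V) :
    glm K g x * glm K (fun y => (g y)⁻¹) x = 1 := by
  simp only [glm, ← Units.val_mul, mul_inv_cancel, Units.val_one]

lemma glAct_mat {Q : Quiv} {d : Q.V → ℕ}
    (g : ∀ x : Q.V, Matrix.GeneralLinearGroup (Fin (d x)) K) (M : Rep K Q d) (a : Q.Ar) :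
    (glAct K g M).mat a = glm K g (Q.t a) * M.mat a * glm K (fun y => (g y)⁻¹) (Q.s a) := rfl

lemma rep_ext {Q : Quiv} {d : Q.V → ℕ} {M N : Rep K Q d}
    (h : ∀ a, M.mat a = N.mat a) : M = N := by
  cases M; cases N; simp only [Rep.mk.injEq]; exact funext h

lemma iso_refl {Q : Quiv} {d : Q.V → ℕ} (M : Rep K Q d) : Iso K M M := by
  refine ⟨fun _ => 1, rep_ext K fun a => ?_⟩
  simp [glAct]

lemma iso_symm {Q : Quiv} {d : Q.V → ℕ} {M N : Rep K Q d} (h : Iso K M N) : Iso K N M := by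
  obtain ⟨g, rfl⟩ := h
  refine ⟨fun x => (g x)⁻¹, rep_ext K fun a => ?_⟩
  rw [glAct_mat, glAct_mat]
  have hg : (fun y => ((g y)⁻¹)⁻¹) = g := by funext y; simp
  rw [hg]
  simp only [← Matrix.mul_assoc]
  rw [glm_inv_mul, Matrix.one_mul, Matrix.mul_assoc, glm_inv_mul, Matrix.mul_one]

lemma iso_schur {Q : Quiv} {d : Q.V → ℕ} {M N : Rep K Q d} (h : Iso K M N)
    (hM : IsSchur K M) : IsSchur K N := by
  obtain ⟨g, rfl⟩ := h
  intro ψ hψ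
  have hφ : IsEndo K M (fun x =>
      glm K (fun y => (g y)⁻¹) x * ψ x * glm K g x) := by
    intro a
    have h := hψ a
    simp only [glAct_mat] at h
    exact conj_helper K (glm_inv_mul K g _) (glm_inv_mul K g _) h
  obtain ⟨c, hc⟩ := hM _ hφ
  refine ⟨c, fun x => ?_⟩
  have e : ψ x = glm K g x * (glm K (fun y => (g y)⁻¹) x * ψ x * glm K g x) *
      glm K (fun y => (g y)⁻¹) x := by
    simp only [mul_assoc]
    rw [glm_mul_inv, mul_one, ← mul_assoc, glm_mul_inv, one_mul]
  rw [e, hc x]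
  simp [mul_smul_comm, smul_mul_assoc, glm_mul_inv]


lemma schur_indec {Q : Quiv} {d : Q.V → ℕ} (hd : d ≠ 0) {M : Rep K Q d}
    (hM : IsSchur K M) : Indec K M := by
  refine ⟨hd, fun d₁ d₂ M₁ M₂ h h₁ h₂ hiso => ?_⟩
  subst h
  have hS : IsSchur K (dsum K M₁ M₂) := iso_schur K (iso_symm K hiso) hM
  classical
  set π : ∀ x : Q.V, Matrix (Fin ((d₁ + d₂) x)) (Fin ((d₁ + d₂) x)) K := fun x =>
    Matrix.reindex finSumFinEquiv finSumFinEquiv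
      (Matrix.fromBlocks (1 : Matrix (Fin (d₁ x)) (Fin (d₁ x)) K) 0 0
        (0 : Matrix (Fin (d₂ x)) (Fin (d₂ x)) K)) with hπ
  have hendo : IsEndo K (dsum K M₁ M₂) π := by
    intro a
    simp only [hπ, dsum, Matrix.reindex_apply, Matrix.submatrix_mul_equiv,
      Matrix.fromBlocks_multiply]
    simp
  obtain ⟨c, hc⟩ := hS π hendo
  obtain ⟨x₁, hx₁⟩ : ∃ x, d₁ x ≠ 0 := Function.ne_iff.mp h₁
  obtain ⟨x₂, hx₂⟩ : ∃ x, d₂ x ≠ 0 := Function.ne_iff.mp h₂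
  have hc1 : c = 1 := by
    have := congrFun (congrFun (hc x₁) (finSumFinEquiv (Sum.inl ⟨0, Nat.pos_of_ne_zero hx₁⟩)))
      (finSumFinEquiv (Sum.inl ⟨0, Nat.pos_of_ne_zero hx₁⟩))
    simp only [hπ, Matrix.reindex_apply, Matrix.submatrix_apply, Equiv.symm_apply_apply,
      Matrix.fromBlocks_apply₁₁, Matrix.one_apply_eq, Matrix.smul_apply, smul_eq_mul,
      mul_one] at this
    exact this.symm
  have hc0 : c = 0 := by
    have := congrFun (congrFun (hc x₂) (finSumFinEquiv (Sum.inr ⟨0, Nat.pos_of_ne_zero hx₂⟩)))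
      (finSumFinEquiv (Sum.inr ⟨0, Nat.pos_of_ne_zero hx₂⟩))
    simp only [hπ, Matrix.reindex_apply, Matrix.submatrix_apply, Equiv.symm_apply_apply,
      Matrix.fromBlocks_apply₂₂, Matrix.zero_apply, Matrix.smul_apply, smul_eq_mul,
      mul_one, Matrix.one_apply_eq] at this
    exact this.symm
  rw [hc1] at hc0
  exact one_ne_zero hc0


open Polynomial in
/-- Mapping a matrix-vector product along a ring hom. -/
lemma map_mulVec {T U : Type} [Fintype U] {α β : Type*} [CommRing α] [CommRing β]
    (σ : α →+* β) (B : Matrix T U α) (v : U → α) (t : T) :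
    (B.map σ).mulVec (fun u => σ (v u)) t = σ (B.mulVec v t) := by
  simp [Matrix.mulVec, dotProduct, map_sum]

open Polynomial in
/-- Step A: if the specialized matrix at `λ₀` has trivial kernel, so does the
generic matrix over the rational function field. -/
lemma stepA {T U : Type} [Fintype T] [Fintype U] [DecidableEq U]
    (B : Matrix T U (Polynomial K)) (lam0 : K)
    (h : ∀ v : U → K, (B.map (fun p => Polynomial.eval lam0 p)).mulVec v = 0 → v = 0) :
    ∀ w : U → RatFunc K,
      (B.map (algebraMap (Polynomial K) (RatFunc K))).mulVec w = 0 → w = 0 := by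
  classical
  -- first, the kernel over polynomials is trivial
  have hpoly : ∀ (n : ℕ) (w : U → Polynomial K), (∑ u, (w u).natDegree) ≤ n →
      B.mulVec w = 0 → w = 0 := by
    intro n
    induction n using Nat.strong_induction_on with
    | _ n ih =>
      intro w hdeg hker
      by_contra hne
      by_cases hev : (fun u => Polynomial.eval lam0 (w u)) = 0
      · -- all entries divisible by (X - C lam0)
        have hdvd : ∀ u, (X - C lam0) ∣ w u := fun u =>
          Polynomial.dvd_iff_isRoot.mpr (congrFun hev u)
        choose w' hw' using hdvd
        have hker' : B.mulVec w' = 0 := by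
          funext t
          have : B.mulVec w t = (X - C lam0) * B.mulVec w' t := by
            simp only [Matrix.mulVec, dotProduct]
            rw [Finset.mul_sum]
            congr 1; funext u
            rw [hw' u]; ring
          have h0 := congrFun hker t
          rw [this] at h0
          have hX : (X - C lam0 : Polynomial K) ≠ 0 := Polynomial.X_sub_C_ne_zero lam0
          simpa [hX] using mul_eq_zero.mp h0
        have hne' : w' ≠ 0 := by
          intro h0
          apply hne
          funext u
          rw [hw' u, congrFun h0 u]
          simp
        obtain ⟨u₀, hu₀⟩ := Function.ne_iff.mp hne'
        have hlt : (∑ u, (w' u).natDegree) < ∑ u, (w u).natDegree := by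
          apply Finset.sum_lt_sum
          · intro u _
            by_cases h0 : w' u = 0
            · simp [h0]
            · rw [hw' u, Polynomial.natDegree_mul (Polynomial.X_sub_C_ne_zero lam0) h0,
                Polynomial.natDegree_X_sub_C]
              omega
          · refine ⟨u₀, Finset.mem_univ _, ?_⟩
            rw [hw' u₀, Polynomial.natDegree_mul (Polynomial.X_sub_C_ne_zero lam0) hu₀,
              Polynomial.natDegree_X_sub_C]
            omega
        exact absurd (ih _ (lt_of_lt_of_le hlt hdeg) w' le_rfl hker') hne'
      · -- evaluation is a nonzero kernel vector of the specialized matrix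
        apply hev
        apply h
        funext t
        have hmv := map_mulVec (Polynomial.evalRingHom lam0) B w t
        have h0 := congrArg (Polynomial.eval lam0) (congrFun hker t)
        rw [Pi.zero_apply, Polynomial.eval_zero] at h0
        rw [Pi.zero_apply, ← h0]
        exact hmv
  -- now clear denominators
  intro w hw
  by_contra hne
  obtain ⟨b, hb⟩ := IsLocalization.exist_integer_multiples
    (nonZeroDivisors (Polynomial K)) Finset.univ w
  choose w' hw' using fun u => hb u (Finset.mem_univ u)
  have halg : Function.Injective (algebraMap (Polynomial K) (RatFunc K)) :=
    IsFractionRing.injective _ _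
  have hbne : algebraMap (Polynomial K) (RatFunc K) (b : Polynomial K) ≠ 0 := by
    intro h0
    exact nonZeroDivisors.ne_zero b.2 (halg (by simpa using h0))
  have hker' : B.mulVec w' = 0 := by
    funext t
    apply halg
    simp only [Pi.zero_apply, map_zero]
    rw [← map_mulVec (algebraMap (Polynomial K) (RatFunc K)) B w' t]
    have e : (fun u => algebraMap (Polynomial K) (RatFunc K) (w' u)) =
        fun u => algebraMap (Polynomial K) (RatFunc K) (b : Polynomial K) * w u := by
      funext u; rw [hw' u, Algebra.smul_def]
    rw [e]
    have e2 : (B.map (algebraMap (Polynomial K) (RatFunc K))).mulVec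
        (fun u => algebraMap (Polynomial K) (RatFunc K) (b : Polynomial K) * w u) t =
        algebraMap (Polynomial K) (RatFunc K) (b : Polynomial K) *
        (B.map (algebraMap (Polynomial K) (RatFunc K))).mulVec w t := by
      simp only [Matrix.mulVec, dotProduct, Finset.mul_sum]
      congr 1; funext u; ring
    rw [e2, congrFun hw t, Pi.zero_apply, mul_zero]
  have : w' = 0 := hpoly _ w' le_rfl hker'
  apply hne
  funext u
  have h2 := hw' u
  rw [congrFun this u, Pi.zero_apply, map_zero] at h2
  rw [Algebra.smul_def] at h2
  have h3 := (mul_eq_zero.mp h2.symm).resolve_left hbne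
  simpa using h3

/-- Step B: if the matrix over the rational function field has trivial kernel,
then it has trivial kernel at all but finitely many specializations. -/
lemma stepB {T U : Type} [Fintype T] [Fintype U] [DecidableEq U] [DecidableEq T]
    (B : Matrix T U (Polynomial K))
    (h : ∀ w : U → RatFunc K,
      (B.map (algebraMap (Polynomial K) (RatFunc K))).mulVec w = 0 → w = 0) :
    ∃ q : Polynomial K, q ≠ 0 ∧ ∀ lam : K, Polynomial.eval lam q ≠ 0 →
      ∀ v : U → K, (B.map (fun p => Polynomial.eval lam p)).mulVec v = 0 → v = 0 := by
  classical
  set Fr := RatFunc K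
  set alg := algebraMap (Polynomial K) Fr with halg
  set BF : Matrix T U Fr := B.map alg with hBF
  have hker : LinearMap.ker BF.mulVecLin = ⊥ := Matrix.ker_mulVecLin_eq_bot_iff.mpr h
  obtain ⟨G, hG⟩ := LinearMap.exists_leftInverse_of_injective BF.mulVecLin hker
  set G' : Matrix U T Fr := LinearMap.toMatrix' G with hG'
  have hGB : G' * BF = 1 := by
    have h1 : LinearMap.toMatrix' (G.comp BF.mulVecLin) = LinearMap.toMatrix' (LinearMap.id (R := Fr) (M := U → Fr)) := by rw [hG]
    rw [LinearMap.toMatrix'_comp, LinearMap.toMatrix'_id] at h1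
    rw [← Matrix.toLin'_apply'] at h1
    rw [LinearMap.toMatrix'_toLin'] at h1
    exact h1
  obtain ⟨b, hb⟩ := IsLocalization.exist_integer_multiples
    (nonZeroDivisors (Polynomial K)) Finset.univ (fun ut : U × T => G' ut.1 ut.2)
  choose G'' hG'' using fun ut : U × T => hb ut (Finset.mem_univ ut)
  have halginj : Function.Injective alg := IsFractionRing.injective _ _
  have hq : (b : Polynomial K) ≠ 0 := nonZeroDivisors.ne_zero b.2
  -- G'' as a matrix over polynomials
  set G₂ : Matrix U T (Polynomial K) := Matrix.of fun u t => G'' (u, t) with hG₂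
  have hGB₂ : G₂ * B = (b : Polynomial K) • 1 := by
    apply Matrix.ext
    intro u u'
    apply halginj
    calc alg ((G₂ * B) u u')
        = ∑ t, alg (G₂ u t * B t u') := by rw [Matrix.mul_apply, map_sum]
      _ = ∑ t, (alg (b : Polynomial K) * G' u t) * BF t u' := by
          refine Finset.sum_congr rfl fun t _ => ?_
          rw [map_mul]
          congr 1
          · rw [hG₂]
            show alg (G'' (u, t)) = _
            rw [hG'' (u, t), Algebra.smul_def]
      _ = alg (b : Polynomial K) * ∑ t, G' u t * BF t u' := by
          rw [Finset.mul_sum]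
          refine Finset.sum_congr rfl fun t _ => by ring
      _ = alg (b : Polynomial K) * (G' * BF) u u' := by rw [Matrix.mul_apply]
      _ = alg (b : Polynomial K) * (1 : Matrix U U Fr) u u' := by rw [hGB]
      _ = alg (((b : Polynomial K) • (1 : Matrix U U (Polynomial K))) u u') := by
          by_cases huu : u = u' <;> simp [Matrix.one_apply, huu]
  refine ⟨(b : Polynomial K), hq, fun lam hlam v hv => ?_⟩
  -- specialize the identity G₂ * B = b • 1 at lam
  have hev := congrArg (Matrix.map · (fun p => Polynomial.eval lam p)) hGB₂
  have hml : (G₂ * B).map (fun p => Polynomial.eval lam p) =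
      G₂.map (fun p => Polynomial.eval lam p) * B.map (fun p => Polynomial.eval lam p) := by
    exact Matrix.map_mul (f := Polynomial.evalRingHom lam)
  rw [hml] at hev
  have hrhs : ((b : Polynomial K) • (1 : Matrix U U (Polynomial K))).map
      (fun p => Polynomial.eval lam p) =
      Polynomial.eval lam (b : Polynomial K) • (1 : Matrix U U K) := by
    ext u u'
    simp only [Matrix.map_apply, Matrix.smul_apply, Matrix.one_apply, smul_eq_mul]
    by_cases huu : u = u' <;> simp [huu]
  rw [hrhs] at hev
  have h3 : (G₂.map (fun p => Polynomial.eval lam p)).mulVec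
      ((B.map (fun p => Polynomial.eval lam p)).mulVec v) =
      Polynomial.eval lam (b : Polynomial K) • v := by
    rw [Matrix.mulVec_mulVec, hev, Matrix.smul_mulVec, Matrix.one_mulVec]
  rw [hv, Matrix.mulVec_zero] at h3
  have h4 := h3.symm
  rw [smul_eq_zero] at h4
  exact (h4.resolve_left hlam)


@[simp] lemma fin_cast_self {n : ℕ} (h : n = n) (p : Fin n) : Fin.cast h p = p := rfl

/-- Index type for entries of a potential endomorphism. -/
abbrev UIdx (Q : Quiv) (d : Q.V → ℕ) : Type := Σ x : Q.V, Fin (d x) × Fin (d x)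

/-- Index type for the linear equations cutting out endomorphisms with a
normalized entry. -/
abbrev TIdx (Q : Quiv) (d : Q.V → ℕ) : Type :=
  (Σ a : Q.Ar, Fin (d (Q.t a)) × Fin (d (Q.s a))) ⊕ Unit

/-- The matrix of polynomials whose specialization at `lam` cuts out the
endomorphisms of `F.evalAt lam` with vanishing normalized entry. -/
noncomputable def Bmat {Q : Quiv} {d : Q.V → ℕ} (F : ParamFamily K Q d)
    (x₀ : Q.V) (p₀ : Fin (d x₀)) : Matrix (TIdx Q d) (UIdx Q d) (Polynomial K) :=
  fun t u =>
  match t with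
  | Sum.inl ⟨a, ij⟩ =>
      (if h : u.1 = Q.t a then
        (if Fin.cast (congrArg d h) u.2.1 = ij.1 then
          F.num a (Fin.cast (congrArg d h) u.2.2) ij.2 else 0)
       else 0)
      - (if h : u.1 = Q.s a then
        (if Fin.cast (congrArg d h) u.2.2 = ij.2 then
          F.num a ij.1 (Fin.cast (congrArg d h) u.2.1) else 0)
       else 0)
  | Sum.inr _ => if h : u.1 = x₀ then
        (if Fin.cast (congrArg d h) u.2.1 = p₀ ∧ Fin.cast (congrArg d h) u.2.2 = p₀
          then 1 else 0)
      else 0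

lemma Bmat_mulVec_inl {Q : Quiv} {d : Q.V → ℕ} (F : ParamFamily K Q d)
    (x₀ : Q.V) (p₀ : Fin (d x₀)) (lam : K) (v : UIdx Q d → K)
    (a : Q.Ar) (i : Fin (d (Q.t a))) (j : Fin (d (Q.s a))) :
    ((Bmat K F x₀ p₀).map (fun p => Polynomial.eval lam p)).mulVec v
      (Sum.inl ⟨a, (i, j)⟩) =
    (∑ q, v ⟨Q.t a, (i, q)⟩ * Polynomial.eval lam (F.num a q j)) -
    (∑ p, Polynomial.eval lam (F.num a i p) * v ⟨Q.s a, (p, j)⟩) := by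
  classical
  simp only [Matrix.mulVec, dotProduct, Matrix.map_apply, Bmat]
  rw [← Finset.univ_sigma_univ, Finset.sum_sigma]
  simp only [Polynomial.eval_sub, apply_dite (Polynomial.eval lam),
    apply_ite (Polynomial.eval lam), Polynomial.eval_zero, sub_mul,
    Finset.sum_sub_distrib]
  congr 1
  · rw [Finset.sum_eq_single (Q.t a)]
    · rw [Fintype.sum_prod_type]
      rw [Finset.sum_eq_single i]
      · simp [mul_comm]
      · intro p _ hp
        apply Finset.sum_eq_zero
        intro q _
        rw [dif_pos rfl]
        simp only [fin_cast_self]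
        rw [if_neg hp, zero_mul]
      · intro h; exact absurd (Finset.mem_univ i) h
    · intro x _ hx
      apply Finset.sum_eq_zero
      intro pq _
      rw [dif_neg hx, zero_mul]
    · intro h; exact absurd (Finset.mem_univ _) h
  · rw [Finset.sum_eq_single (Q.s a)]
    · rw [Fintype.sum_prod_type]
      rw [Finset.sum_comm]
      rw [Finset.sum_eq_single j]
      · simp [mul_comm]
      · intro q _ hq
        apply Finset.sum_eq_zero
        intro p _
        rw [dif_pos rfl]
        simp only [fin_cast_self]
        rw [if_neg hq, zero_mul]
      · intro h; exact absurd (Finset.mem_univ j) h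
    · intro x _ hx
      apply Finset.sum_eq_zero
      intro pq _
      rw [dif_neg hx, zero_mul]
    · intro h; exact absurd (Finset.mem_univ _) h

lemma Bmat_mulVec_inr {Q : Quiv} {d : Q.V → ℕ} (F : ParamFamily K Q d)
    (x₀ : Q.V) (p₀ : Fin (d x₀)) (lam : K) (v : UIdx Q d → K) (z : Unit) :
    ((Bmat K F x₀ p₀).map (fun p => Polynomial.eval lam p)).mulVec v (Sum.inr z) =
      v ⟨x₀, (p₀, p₀)⟩ := by
  classical
  simp only [Matrix.mulVec, dotProduct, Matrix.map_apply, Bmat]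
  rw [← Finset.univ_sigma_univ, Finset.sum_sigma]
  rw [Finset.sum_eq_single x₀]
  · rw [Fintype.sum_prod_type]
    rw [Finset.sum_eq_single p₀]
    · rw [Finset.sum_eq_single p₀]
      · simp
      · intro q _ hq
        rw [dif_pos rfl]
        simp only [fin_cast_self]
        rw [if_neg (by simp [hq]), Polynomial.eval_zero, zero_mul]
      · intro h; exact absurd (Finset.mem_univ p₀) h
    · intro p _ hp
      apply Finset.sum_eq_zero
      intro q _
      rw [dif_pos rfl]
      simp only [fin_cast_self]
      rw [if_neg (by simp [hp]), Polynomial.eval_zero, zero_mul]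
    · intro h; exact absurd (Finset.mem_univ p₀) h
  · intro x _ hx
    apply Finset.sum_eq_zero
    intro pq _
    rw [dif_neg hx, Polynomial.eval_zero, zero_mul]
  · intro h; exact absurd (Finset.mem_univ x₀) h


lemma isEndo_iff_sums {Q : Quiv} {d : Q.V → ℕ} (F : ParamFamily K Q d) (lam : K)
    (hf : Polynomial.eval lam F.f ≠ 0)
    (φ : ∀ x : Q.V, Matrix (Fin (d x)) (Fin (d x)) K) :
    IsEndo K (F.evalAt K lam) φ ↔
      ∀ (a : Q.Ar) (i : Fin (d (Q.t a))) (j : Fin (d (Q.s a))),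
        ∑ q, φ (Q.t a) i q * Polynomial.eval lam (F.num a q j) =
        ∑ p, Polynomial.eval lam (F.num a i p) * φ (Q.s a) p j := by
  have hcc : (Polynomial.eval lam F.f) ^ F.k ≠ 0 := pow_ne_zero _ hf
  unfold IsEndo IsHom
  apply forall_congr'
  intro a
  rw [← Matrix.ext_iff]
  apply forall_congr'
  intro i
  apply forall_congr'
  intro j
  have hmat : ∀ p q, (F.evalAt K lam).mat a p q =
      Polynomial.eval lam (F.num a p q) / (Polynomial.eval lam F.f) ^ F.k := fun p q => rfl
  rw [Matrix.mul_apply, Matrix.mul_apply]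
  simp only [hmat]
  rw [show ∀ c : K, ∀ f : Fin (d (Q.t a)) → K,
    (∑ q, φ (Q.t a) i q * (f q / c)) = (∑ q, φ (Q.t a) i q * f q) / c from
    fun c f => by rw [Finset.sum_div]; exact Finset.sum_congr rfl fun q _ => by ring]
  rw [show ∀ c : K, ∀ f : Fin (d (Q.s a)) → K,
    (∑ p, (f p / c) * φ (Q.s a) p j) = (∑ p, f p * φ (Q.s a) p j) / c from
    fun c f => by rw [Finset.sum_div]; exact Finset.sum_congr rfl fun p _ => by ring]
  rw [div_eq_mul_inv, div_eq_mul_inv, mul_left_inj' (inv_ne_zero hcc)]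

lemma schur_iff_ker {Q : Quiv} {d : Q.V → ℕ} (F : ParamFamily K Q d)
    (x₀ : Q.V) (p₀ : Fin (d x₀)) (lam : K) (hf : Polynomial.eval lam F.f ≠ 0) :
    IsSchur K (F.evalAt K lam) ↔
      ∀ v : UIdx Q d → K,
        ((Bmat K F x₀ p₀).map (fun p => Polynomial.eval lam p)).mulVec v = 0 → v = 0 := by
  constructor
  · intro hS v hv
    set φ : ∀ x : Q.V, Matrix (Fin (d x)) (Fin (d x)) K :=
      fun x => Matrix.of fun p q => v ⟨x, (p, q)⟩ with hφ
    have hendo : IsEndo K (F.evalAt K lam) φ := by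
      rw [isEndo_iff_sums K F lam hf]
      intro a i j
      have := congrFun hv (Sum.inl ⟨a, (i, j)⟩)
      rw [Bmat_mulVec_inl, Pi.zero_apply, sub_eq_zero] at this
      exact this
    obtain ⟨c, hc⟩ := hS φ hendo
    have hz := congrFun hv (Sum.inr ())
    rw [Bmat_mulVec_inr, Pi.zero_apply] at hz
    have hc0 : c = 0 := by
      have := congrFun (congrFun (hc x₀) p₀) p₀
      rw [Matrix.smul_apply, Matrix.one_apply_eq, smul_eq_mul, mul_one] at this
      rw [← this]
      exact hz
    funext u
    obtain ⟨x, p, q⟩ := u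
    have := congrFun (congrFun (hc x) p) q
    rw [hc0, zero_smul, Matrix.zero_apply] at this
    exact this
  · intro hinj φ hendo
    set c : K := φ x₀ p₀ p₀ with hcdef
    refine ⟨c, fun x => ?_⟩
    set ψ : ∀ x : Q.V, Matrix (Fin (d x)) (Fin (d x)) K :=
      fun x => φ x - c • 1 with hψ
    have hendo' : IsEndo K (F.evalAt K lam) ψ := by
      intro a
      simp only [hψ]
      rw [Matrix.sub_mul, Matrix.mul_sub]
      rw [Matrix.smul_mul, Matrix.mul_smul, Matrix.one_mul, Matrix.mul_one]
      rw [hendo a]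
    set v : UIdx Q d → K := fun u => ψ u.1 u.2.1 u.2.2 with hv
    have hker : ((Bmat K F x₀ p₀).map (fun p => Polynomial.eval lam p)).mulVec v = 0 := by
      funext t
      match t with
      | Sum.inl ⟨a, (i, j)⟩ =>
        rw [Bmat_mulVec_inl, Pi.zero_apply, sub_eq_zero]
        exact (isEndo_iff_sums K F lam hf ψ).mp hendo' a i j
      | Sum.inr z =>
        rw [Bmat_mulVec_inr, Pi.zero_apply]
        simp only [hv, hψ]
        simp [Matrix.sub_apply, Matrix.one_apply_eq, hcdef]
    have hv0 := hinj v hker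
    have hx : ψ x = 0 := by
      funext p q
      exact congrFun hv0 ⟨x, (p, q)⟩
    have := sub_eq_zero.mp hx
    exact this


/-- A `d`-dimensional module over a quiver with `d = 0` is trivially Schur. -/
lemma schur_of_zero {Q : Quiv} {d : Q.V → ℕ} (hd : ∀ x, d x = 0) (M : Rep K Q d) :
    IsSchur K M := by
  intro φ _
  refine ⟨0, fun x => ?_⟩
  funext p q
  exact absurd p.isLt (by simp [hd x])

/-- The key spreading-out lemma: if one member of a one-parameter family is
Schur, then all members off a finite set of parameters are Schur. -/
lemma schur_spread {Q : Quiv} {d : Q.V → ℕ} (F : ParamFamily K Q d) (lam0 : K)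
    (h0 : Polynomial.eval lam0 F.f ≠ 0) (hS : IsSchur K (F.evalAt K lam0)) :
    ∃ q : Polynomial K, q ≠ 0 ∧ ∀ lam : K, Polynomial.eval lam F.f ≠ 0 →
      Polynomial.eval lam q ≠ 0 → IsSchur K (F.evalAt K lam) := by
  classical
  by_cases hd : ∀ x : Q.V, d x = 0
  · exact ⟨1, one_ne_zero, fun lam _ _ => schur_of_zero K hd _⟩
  · push_neg at hd
    obtain ⟨x₀, hx₀⟩ := hd
    set p₀ : Fin (d x₀) := ⟨0, Nat.pos_of_ne_zero hx₀⟩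
    have hinj0 := (schur_iff_ker K F x₀ p₀ lam0 h0).mp hS
    have hFr := stepA K (Bmat K F x₀ p₀) lam0 hinj0
    obtain ⟨q, hq, hspec⟩ := stepB K (Bmat K F x₀ p₀) hFr
    exact ⟨q, hq, fun lam hf hql =>
      (schur_iff_ker K F x₀ p₀ lam hf).mpr (hspec lam hql)⟩

/-- Rescaling a family by a nonzero polynomial `q`: same members, but only at
parameters where `q` does not vanish. -/
noncomputable def modFam {Q : Quiv} {d : Q.V → ℕ} (F : ParamFamily K Q d)
    (q : Polynomial K) (hq : q ≠ 0) : ParamFamily K Q d where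
  f := F.f * q
  hf := mul_ne_zero F.hf hq
  k := F.k
  num := fun a => Matrix.of fun i j => q ^ F.k * F.num a i j

lemma modFam_evalAt {Q : Quiv} {d : Q.V → ℕ} (F : ParamFamily K Q d)
    (q : Polynomial K) (hq : q ≠ 0) (lam : K)
    (hlam : Polynomial.eval lam ((modFam K F q hq).f) ≠ 0) :
    (modFam K F q hq).evalAt K lam = F.evalAt K lam ∧
      Polynomial.eval lam F.f ≠ 0 ∧ Polynomial.eval lam q ≠ 0 := by
  have hmul : Polynomial.eval lam ((modFam K F q hq).f) =
      Polynomial.eval lam F.f * Polynomial.eval lam q := by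
    simp [modFam]
  rw [hmul] at hlam
  have hf : Polynomial.eval lam F.f ≠ 0 := fun h => hlam (by rw [h, zero_mul])
  have hql : Polynomial.eval lam q ≠ 0 := fun h => hlam (by rw [h, mul_zero])
  refine ⟨rep_ext K fun a => ?_, hf, hql⟩
  funext i j
  show Polynomial.eval lam ((modFam K F q hq).num a i j) /
      (Polynomial.eval lam ((modFam K F q hq).f)) ^ (modFam K F q hq).k = _
  show _ = Polynomial.eval lam (F.num a i j) / (Polynomial.eval lam F.f) ^ F.k
  have h1 : (modFam K F q hq).num a i j = q ^ F.k * F.num a i j := rfl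
  have h2 : (modFam K F q hq).f = F.f * q := rfl
  have h3 : (modFam K F q hq).k = F.k := rfl
  rw [h1, h2, h3]
  rw [Polynomial.eval_mul, Polynomial.eval_mul, Polynomial.eval_pow, mul_pow]
  rw [div_eq_div_iff (mul_ne_zero (pow_ne_zero _ hf) (pow_ne_zero _ hql)) (pow_ne_zero _ hf)]
  ring


/-- Lemma 2.3.  Every tame finite-dimensional (bound quiver)
algebra `A = KQ/I` over an algebraically closed field `K` of characteristic
zero is Schur-tame. -/
theorem tame_implies_schurTame
    (K : Type) [Field K] [IsAlgClosed K] [CharZero K]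
    (Q : Quiv) (R : RelSet K Q) (hadm : R.IsAdmissible)
    (htame : IsTame K (modVar K R)) :
    IsSchurTame K (modVar K R) := by
  classical
  intro d
  obtain ⟨n, F, hmem, hinj, Exc, hExcFin, hcov⟩ := htame d
  set S : Fin n → Prop := fun i => ∃ lam, Polynomial.eval lam (F i).f ≠ 0 ∧
    IsSchur K ((F i).evalAt K lam) with hSdef
  have hchoice : ∀ i : Fin n, ∃ q : Polynomial K, q ≠ 0 ∧
      (S i → ∀ lam, Polynomial.eval lam (F i).f ≠ 0 → Polynomial.eval lam q ≠ 0 →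
        IsSchur K ((F i).evalAt K lam)) := by
    intro i
    by_cases hSi : S i
    · obtain ⟨lam0, h0, hS0⟩ := hSi
      obtain ⟨q, hq, hsp⟩ := schur_spread K (F i) lam0 h0 hS0
      exact ⟨q, hq, fun _ lam hf hql => hsp lam hf hql⟩
    · exact ⟨1, one_ne_zero, fun h => absurd h hSi⟩
  choose qq hqq0 hqqS using hchoice
  set Exc' : Set (Rep K Q d) := (Exc ∪ {M : Rep K Q d | d = 0}) ∪
    ⋃ i : Fin n, (fun lam => (F i).evalAt K lam) ''
      {lam : K | Polynomial.eval lam (qq i) = 0} with hE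
  have hzfin : ({M : Rep K Q d | d = 0} : Set (Rep K Q d)).Finite := by
    by_cases hd : d = 0
    · have hsub : Subsingleton (Rep K Q d) := by
        constructor
        intro M N
        apply rep_ext
        intro a
        funext i j
        exact absurd i.isLt (by simp [congrFun hd (Q.t a)])
      have : Finite (Rep K Q d) := Finite.of_subsingleton
      exact Set.toFinite _
    · have : ({M : Rep K Q d | d = 0} : Set (Rep K Q d)) = ∅ := by
        ext M; simp [hd]
      rw [this]; exact Set.finite_empty
  have hExc'Fin : Exc'.Finite := by
    refine Set.Finite.union (Set.Finite.union hExcFin hzfin) ?_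
    apply Set.finite_iUnion
    intro i
    exact (Polynomial.finite_setOf_isRoot (hqq0 i)).image _
  by_cases hex : ∃ i₀, S i₀
  · obtain ⟨i₀, hi₀⟩ := hex
    set J : Fin n → Fin n := fun i => if S i then i else i₀ with hJdef
    have hSJ : ∀ i, S (J i) := by
      intro i
      by_cases h : S i
      · rw [hJdef]; simp only [if_pos h]; exact h
      · rw [hJdef]; simp only [if_neg h]; exact hi₀
    set G : Fin n → ParamFamily K Q d :=
      fun i => modFam K (F (J i)) (qq (J i)) (hqq0 _) with hGdef
    refine ⟨n, G, ?_, ?_, Exc', hExc'Fin, ?_⟩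
    · intro i lam hf
      obtain ⟨heq, hf1, hq1⟩ := modFam_evalAt K (F (J i)) (qq (J i)) (hqq0 _) lam hf
      rw [show (G i).evalAt K lam = (modFam K (F (J i)) (qq (J i)) (hqq0 _)).evalAt K lam
        from rfl, heq]
      exact ⟨(hmem (J i) lam hf1).1, hqqS (J i) (hSJ i) lam hf1 hq1⟩
    · intro i lam1 lam2 h1 h2 hiso
      obtain ⟨e1, hf1, _⟩ := modFam_evalAt K (F (J i)) (qq (J i)) (hqq0 _) lam1 h1
      obtain ⟨e2, hf2, _⟩ := modFam_evalAt K (F (J i)) (qq (J i)) (hqq0 _) lam2 h2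
      rw [show (G i).evalAt K lam1 = (modFam K (F (J i)) (qq (J i)) (hqq0 _)).evalAt K lam1
        from rfl, e1] at hiso
      rw [show (G i).evalAt K lam2 = (modFam K (F (J i)) (qq (J i)) (hqq0 _)).evalAt K lam2
        from rfl, e2] at hiso
      exact hinj (J i) lam1 lam2 hf1 hf2 hiso
    · intro M hM hSchur
      by_cases hd : d = 0
      · exact Or.inr ⟨M, Set.mem_union_left _ (Set.mem_union_right _ hd), iso_refl K M⟩
      rcases hcov M hM (schur_indec K hd hSchur) with ⟨i, lam, hf, hiso⟩ | ⟨E, hEm, hiso⟩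
      · have hSi : S i := ⟨lam, hf, iso_schur K hiso hSchur⟩
        have hJi : J i = i := by rw [hJdef]; simp only [if_pos hSi]
        by_cases hql : Polynomial.eval lam (qq i) = 0
        · refine Or.inr ⟨(F i).evalAt K lam, ?_, hiso⟩
          apply Set.mem_union_right
          exact Set.mem_iUnion.mpr ⟨i, ⟨lam, hql, rfl⟩⟩
        · left
          have hGf : Polynomial.eval lam (G i).f ≠ 0 := by
            have : (G i).f = (F (J i)).f * qq (J i) := rfl
            rw [this, hJi, Polynomial.eval_mul]
            exact mul_ne_zero hf hql
          refine ⟨i, lam, hGf, ?_⟩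
          obtain ⟨heq, _, _⟩ := modFam_evalAt K (F (J i)) (qq (J i)) (hqq0 _) lam hGf
          rw [show (G i).evalAt K lam = (modFam K (F (J i)) (qq (J i)) (hqq0 _)).evalAt K lam
            from rfl, heq, hJi]
          exact hiso
      · exact Or.inr ⟨E, Set.mem_union_left _ (Set.mem_union_left _ hEm), hiso⟩
  · refine ⟨0, Fin.elim0, fun i => i.elim0, fun i => i.elim0, Exc', hExc'Fin, ?_⟩
    intro M hM hSchur
    by_cases hd : d = 0
    · exact Or.inr ⟨M, Set.mem_union_left _ (Set.mem_union_right _ hd), iso_refl K M⟩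
    rcases hcov M hM (schur_indec K hd hSchur) with ⟨i, lam, hf, hiso⟩ | ⟨E, hEm, hiso⟩
    · exact absurd ⟨i, lam, hf, iso_schur K hiso hSchur⟩ hex
    · exact Or.inr ⟨E, Set.mem_union_left _ (Set.mem_union_left _ hEm), hiso⟩

end ModuliPaper
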